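/- Let G be any group and let x, y, z ∈ G. Then the element [xy, z, z, z, z, z] · ([x,z,z,z,z,z] · [x,z,y,z,z,z,z] · [y,z,z,z,z,z])⁻¹ lies in γ_8(H), where H is the subgroup of G generated by x, y, z; that is, [xy,z,z,z,z,z] ≡ [x,z,z,z,z,z][x,z,y,z,z,z,z][y,z,z,z,z,z] modulo γ_8(H). -/

import Mathlib

/-- The commutator `[a,b] = a⁻¹ b⁻¹ a b`. -/
def gc {G : Type*} [Group G] (a b : G) : G := a⁻¹ * b⁻¹ * a * b

namespace Gamma8Aux

open Subgroup

variable {G : Type*} [Group G]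

theorem lcs_succ' (n : ℕ) :
    (⊤ : Subgroup G).lowerCentralSeries (n + 1) = ⁅(⊤ : Subgroup G).lowerCentralSeries n, ⊤⁆ := rfl

theorem three_subgroups {A B C N : Subgroup G} [N.Normal]
    (h1 : ⁅⁅B, C⁆, A⁆ ≤ N) (h2 : ⁅⁅C, A⁆, B⁆ ≤ N) : ⁅⁅A, B⁆, C⁆ ≤ N := by
  have key : ∀ {X Y Z : Subgroup G}, ⁅⁅X, Y⁆, Z⁆ ≤ N ↔
      ⁅⁅map (QuotientGroup.mk' N) X, map (QuotientGroup.mk' N) Y⁆,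
        map (QuotientGroup.mk' N) Z⁆ = ⊥ := by
    intro X Y Z
    rw [← Subgroup.map_commutator, ← Subgroup.map_commutator, Subgroup.map_eq_bot_iff,
      QuotientGroup.ker_mk']
  rw [key]
  exact Subgroup.commutator_commutator_eq_bot_of_rotate (key.mp h1) (key.mp h2)

theorem lcs_comm : ∀ (n m : ℕ),
    ⁅(⊤ : Subgroup G).lowerCentralSeries m, (⊤ : Subgroup G).lowerCentralSeries n⁆ ≤ (⊤ : Subgroup G).lowerCentralSeries (m + n + 1)
  | 0, m => by
      rw [Subgroup.lowerCentralSeries_zero, ← lcs_succ']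
  | n + 1, m => by
      have h1 : ⁅⁅(⊤ : Subgroup G), (⊤ : Subgroup G).lowerCentralSeries m⁆, (⊤ : Subgroup G).lowerCentralSeries n⁆ ≤
          (⊤ : Subgroup G).lowerCentralSeries (m + (n + 1) + 1) := by
        calc ⁅⁅(⊤ : Subgroup G), (⊤ : Subgroup G).lowerCentralSeries m⁆, (⊤ : Subgroup G).lowerCentralSeries n⁆
            = ⁅⁅(⊤ : Subgroup G).lowerCentralSeries m, ⊤⁆, (⊤ : Subgroup G).lowerCentralSeries n⁆ := by
              rw [Subgroup.commutator_comm (⊤ : Subgroup G)]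
          _ = ⁅(⊤ : Subgroup G).lowerCentralSeries (m + 1), (⊤ : Subgroup G).lowerCentralSeries n⁆ := by
              rw [← lcs_succ']
          _ ≤ (⊤ : Subgroup G).lowerCentralSeries (m + 1 + n + 1) := lcs_comm n (m + 1)
          _ = (⊤ : Subgroup G).lowerCentralSeries (m + (n + 1) + 1) := by congr 1; omega
      have h2 : ⁅⁅(⊤ : Subgroup G).lowerCentralSeries m, (⊤ : Subgroup G).lowerCentralSeries n⁆, (⊤ : Subgroup G)⁆ ≤
          (⊤ : Subgroup G).lowerCentralSeries (m + (n + 1) + 1) := by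
        calc ⁅⁅(⊤ : Subgroup G).lowerCentralSeries m, (⊤ : Subgroup G).lowerCentralSeries n⁆, (⊤ : Subgroup G)⁆
            ≤ ⁅(⊤ : Subgroup G).lowerCentralSeries (m + n + 1), (⊤ : Subgroup G)⁆ :=
              Subgroup.commutator_mono (lcs_comm n m) le_rfl
          _ = (⊤ : Subgroup G).lowerCentralSeries (m + n + 1 + 1) := (lcs_succ' _).symm
          _ = (⊤ : Subgroup G).lowerCentralSeries (m + (n + 1) + 1) := rfl
      calc ⁅(⊤ : Subgroup G).lowerCentralSeries m, (⊤ : Subgroup G).lowerCentralSeries (n + 1)⁆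
          = ⁅(⊤ : Subgroup G).lowerCentralSeries (n + 1), (⊤ : Subgroup G).lowerCentralSeries m⁆ :=
            Subgroup.commutator_comm _ _
        _ = ⁅⁅(⊤ : Subgroup G).lowerCentralSeries n, ⊤⁆, (⊤ : Subgroup G).lowerCentralSeries m⁆ := by
            rw [← lcs_succ']
        _ ≤ (⊤ : Subgroup G).lowerCentralSeries (m + (n + 1) + 1) := three_subgroups h1 h2

open scoped commutatorElement in
theorem gc_eq (a b : G) : gc a b = ⁅a⁻¹, b⁻¹⁆ := by
  simp [gc, commutatorElement_def]

theorem gc_mem {i j : ℕ} {a b : G} (ha : a ∈ (⊤ : Subgroup G).lowerCentralSeries i)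
    (hb : b ∈ (⊤ : Subgroup G).lowerCentralSeries j) : gc a b ∈ (⊤ : Subgroup G).lowerCentralSeries (i + j + 1) := by
  rw [gc_eq]
  exact lcs_comm j i (Subgroup.commutator_mem_commutator (inv_mem ha) (inv_mem hb))

theorem gc_expand (a b c : G) : gc (a * b) c = gc a c * gc (gc a c) b * gc b c := by
  simp only [gc]; group

theorem map_gc {H : Type*} [Group H] (φ : G →* H) (a b : G) :
    φ (gc a b) = gc (φ a) (φ b) := by simp [gc]

theorem trivial_of_wt (hbot : (⊤ : Subgroup G).lowerCentralSeries 7 = ⊥) {i : ℕ} {a : G}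
    (h : a ∈ (⊤ : Subgroup G).lowerCentralSeries i) (hi : 7 ≤ i) : a = 1 := by
  have := Subgroup.lowerCentralSeries_antitone ⊤ hi h
  rwa [hbot, Subgroup.mem_bot] at this

theorem iter_mem (Z : G) : ∀ (n i : ℕ) {a : G}, a ∈ (⊤ : Subgroup G).lowerCentralSeries i →
    (fun a => gc a Z)^[n] a ∈ (⊤ : Subgroup G).lowerCentralSeries (i + n)
  | 0, i, a, ha => ha
  | n + 1, i, a, ha => by
      rw [Function.iterate_succ_apply]
      have h1 : gc a Z ∈ (⊤ : Subgroup G).lowerCentralSeries (i + 1) :=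
        gc_mem (j := 0) ha (Subgroup.mem_top Z)
      have h2 := iter_mem Z n (i + 1) h1
      have : i + 1 + n = i + (n + 1) := by omega
      rwa [this] at h2

theorem split (hbot : (⊤ : Subgroup G).lowerCentralSeries 7 = ⊥) (Z : G) :
    ∀ (n i j : ℕ) (a b : G), a ∈ (⊤ : Subgroup G).lowerCentralSeries i → b ∈ (⊤ : Subgroup G).lowerCentralSeries j →
    6 ≤ i + j + n →
    (fun a => gc a Z)^[n] (a * b) = (fun a => gc a Z)^[n] a * (fun a => gc a Z)^[n] b
  | 0, i, j, a, b, _, _, _ => rfl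
  | n + 1, i, j, a, b, ha, hb, hn => by
      have hfa : gc a Z ∈ (⊤ : Subgroup G).lowerCentralSeries (i + 1) :=
        gc_mem (j := 0) ha (Subgroup.mem_top Z)
      have hfb : gc b Z ∈ (⊤ : Subgroup G).lowerCentralSeries (j + 1) :=
        gc_mem (j := 0) hb (Subgroup.mem_top Z)
      have he : gc (gc a Z) b ∈ (⊤ : Subgroup G).lowerCentralSeries (i + j + 2) := by
        have := gc_mem hfa hb
        have heq : i + 1 + j + 1 = i + j + 2 := by omega
        rwa [heq] at this
      have hebf : gc (gc a Z) b * gc b Z ∈ (⊤ : Subgroup G).lowerCentralSeries (j + 1) :=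
        mul_mem (Subgroup.lowerCentralSeries_antitone ⊤ (by omega) he) hfb
      have step : gc (a * b) Z = gc a Z * (gc (gc a Z) b * gc b Z) := by
        rw [gc_expand, mul_assoc]
      rw [Function.iterate_succ_apply, Function.iterate_succ_apply,
        Function.iterate_succ_apply]
      show (fun a => gc a Z)^[n] (gc (a * b) Z) = _
      rw [step, split hbot Z n (i + 1) (j + 1) _ _ hfa hebf (by omega),
        split hbot Z n (i + j + 2) (j + 1) _ _ he hfb (by omega),
        trivial_of_wt hbot (iter_mem Z n (i + j + 2) he) (by omega), one_mul]
theorem lcs_le_map_of_surjective {H : Type*} [Group H] {f : G →* H}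
    (hf : Function.Surjective f) :
    ∀ n, (⊤ : Subgroup H).lowerCentralSeries n ≤ ((⊤ : Subgroup G).lowerCentralSeries n).map f
  | 0 => by
      rw [Subgroup.lowerCentralSeries_zero, Subgroup.lowerCentralSeries_zero, ← MonoidHom.range_eq_map,
        MonoidHom.range_eq_top_of_surjective f hf]
  | n + 1 => by
      rw [lcs_succ', lcs_succ', Subgroup.map_commutator]
      refine Subgroup.commutator_mono (lcs_le_map_of_surjective hf n) ?_
      rw [← MonoidHom.range_eq_map, MonoidHom.range_eq_top_of_surjective f hf]

end Gamma8Aux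

open Gamma8Aux in
/-- In any group `G`, for `x, y, z ∈ G`, one has
`[xy,z,z,z,z,z] ≡ [x,z,z,z,z,z]·[x,z,y,z,z,z,z]·[y,z,z,z,z,z]` modulo `γ₈(H)`,
where `H = ⟨x, y, z⟩`. -/
theorem commutator_expansion_mod_gamma8
    (G : Type*) [Group G] (x y z : G) :
    gc (gc (gc (gc (gc (x * y) z) z) z) z) z *
      (gc (gc (gc (gc (gc x z) z) z) z) z *
        gc (gc (gc (gc (gc (gc x z) y) z) z) z) z *
        gc (gc (gc (gc (gc y z) z) z) z) z)⁻¹ ∈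
      ((⊤ : Subgroup (Subgroup.closure ({x, y, z} : Set G))).lowerCentralSeries 7).map
        (Subgroup.closure ({x, y, z} : Set G)).subtype := by
  have hx : x ∈ Subgroup.closure ({x, y, z} : Set G) := Subgroup.subset_closure (by simp)
  have hy : y ∈ Subgroup.closure ({x, y, z} : Set G) := Subgroup.subset_closure (by simp)
  have hz : z ∈ Subgroup.closure ({x, y, z} : Set G) := Subgroup.subset_closure (by simp)
  set H := Subgroup.closure ({x, y, z} : Set G) with hH
  let X : H := ⟨x, hx⟩
  let Y : H := ⟨y, hy⟩
  let Z : H := ⟨z, hz⟩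
  refine Subgroup.mem_map.mpr ⟨gc (gc (gc (gc (gc (X * Y) Z) Z) Z) Z) Z *
      (gc (gc (gc (gc (gc X Z) Z) Z) Z) Z *
        gc (gc (gc (gc (gc (gc X Z) Y) Z) Z) Z) Z *
        gc (gc (gc (gc (gc Y Z) Z) Z) Z) Z)⁻¹, ?_, rfl⟩
  set N := (⊤ : Subgroup H).lowerCentralSeries 7 with hN
  let π := QuotientGroup.mk' N
  have hbot : (⊤ : Subgroup (H ⧸ N)).lowerCentralSeries 7 = ⊥ := by
    rw [eq_bot_iff]
    refine le_trans (lcs_le_map_of_surjective (QuotientGroup.mk'_surjective N) 7) ?_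
    exact le_of_eq ((Subgroup.map_eq_bot_iff _).mpr (by rw [QuotientGroup.ker_mk']))
  rw [← QuotientGroup.eq_one_iff]
  show π _ = 1
  rw [map_mul, map_inv, mul_inv_eq_one]
  simp only [map_mul, map_gc]
  set A : H ⧸ N := π X with hA
  set B : H ⧸ N := π Y with hB
  set C : H ⧸ N := π Z with hC
  have ha1 : gc A C ∈ (⊤ : Subgroup (H ⧸ N)).lowerCentralSeries 1 :=
    gc_mem (i := 0) (j := 0) (Subgroup.mem_top A) (Subgroup.mem_top C)
  have hb1 : gc B C ∈ (⊤ : Subgroup (H ⧸ N)).lowerCentralSeries 1 :=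
    gc_mem (i := 0) (j := 0) (Subgroup.mem_top B) (Subgroup.mem_top C)
  have hs : gc (gc A C) B ∈ (⊤ : Subgroup (H ⧸ N)).lowerCentralSeries 2 :=
    gc_mem (j := 0) ha1 (Subgroup.mem_top B)
  have hsb : gc (gc A C) B * gc B C ∈ (⊤ : Subgroup (H ⧸ N)).lowerCentralSeries 1 :=
    mul_mem (Subgroup.lowerCentralSeries_antitone ⊤ (by omega) hs) hb1
  have e4 : ∀ a : H ⧸ N, (fun a => gc a C)^[4] a = gc (gc (gc (gc a C) C) C) C :=
    fun a => rfl
  calc gc (gc (gc (gc (gc (A * B) C) C) C) C) C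
      = (fun a => gc a C)^[4] (gc (A * B) C) := (e4 _).symm
    _ = (fun a => gc a C)^[4] (gc A C * (gc (gc A C) B * gc B C)) := by
        rw [gc_expand, mul_assoc]
    _ = (fun a => gc a C)^[4] (gc A C) *
          ((fun a => gc a C)^[4] (gc (gc A C) B) * (fun a => gc a C)^[4] (gc B C)) := by
        rw [split hbot C 4 1 1 _ _ ha1 hsb (by omega),
          split hbot C 4 2 1 _ _ hs hb1 (by omega)]
    _ = gc (gc (gc (gc (gc A C) C) C) C) C *
          gc (gc (gc (gc (gc (gc A C) B) C) C) C) C *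
          gc (gc (gc (gc (gc B C) C) C) C) C := by
        rw [e4, e4, e4, mul_assoc]
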